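/- Let (t_n) be a strictly increasing sequence of positive reals with ∑_{n=1}^∞ e^{-t_n² s} < ∞ for all s > 0, and set Z₄(s) = ∑_{n=1}^∞ e^{-t_n² s}. Then for every n ≥ 0, lim_{s→∞} sqrt(−(1/s)·log(Z₄(s) − ∑_{k=1}^n e^{-t_k² s})) = t_{n+1}. -/

import Mathlib

open Filter Topology

/-- Recurrence extraction for the Jacobi-theta-type series: removing the first
`n` exponential terms, the decay rate of the remainder recovers `t_{n+1}`. -/
theorem theta_series_extract_tail (t : ℕ → ℝ) (hpos : ∀ n, 0 < t n)
    (hmono : StrictMono t)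
    (hsum : ∀ s : ℝ, 0 < s → Summable fun n => Real.exp (-(t n) ^ 2 * s)) :
    ∀ n : ℕ,
      Tendsto (fun s : ℝ =>
          Real.sqrt (-(1 / s) * Real.log ((∑' k, Real.exp (-(t k) ^ 2 * s)) -
            ∑ k ∈ Finset.range n, Real.exp (-(t k) ^ 2 * s))))
        atTop (𝓝 (t n)) := by
  intro n
  set d : ℕ → ℝ := fun i => (t (i + n)) ^ 2 - (t n) ^ 2 with hd
  have hdnn : ∀ i, 0 ≤ d i := by
    intro i
    have h1 : t n ≤ t (i + n) := hmono.monotone (Nat.le_add_left n i)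
    have h2 : 0 < t n := hpos n
    simp only [hd]
    nlinarith
  have htail : ∀ s : ℝ, 0 < s → Summable (fun i => Real.exp (-(t (i + n)) ^ 2 * s)) := by
    intro s hs
    exact (summable_nat_add_iff n).2 (hsum s hs)
  set R : ℝ → ℝ := fun s => ∑' i, Real.exp (-(d i) * s) with hR
  have hRsum : ∀ s : ℝ, 0 < s → Summable (fun i => Real.exp (-(d i) * s)) := by
    intro s hs
    have : (fun i => Real.exp (-(d i) * s))
        = fun i => Real.exp ((t n) ^ 2 * s) * Real.exp (-(t (i + n)) ^ 2 * s) := by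
      funext i
      rw [← Real.exp_add]
      simp only [hd]
      ring_nf
    rw [this]
    exact (htail s hs).mul_left _
  have hRge : ∀ s : ℝ, 0 < s → 1 ≤ R s := by
    intro s hs
    have h0 := Summable.le_tsum (hRsum s hs) 0 (fun j _ => (Real.exp_pos _).le)
    have hd0 : d 0 = 0 := by simp [hd]
    rw [hd0, neg_zero, zero_mul, Real.exp_zero] at h0
    exact h0
  have hRle : ∀ s : ℝ, 1 ≤ s → R s ≤ R 1 := by
    intro s hs
    refine Summable.tsum_le_tsum (fun i => ?_) (hRsum s (by linarith)) (hRsum 1 one_pos)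
    apply Real.exp_le_exp.2
    have := hdnn i
    nlinarith
  -- the tail sum factors
  have hfact : ∀ s : ℝ, 0 < s →
      (∑' k, Real.exp (-(t k) ^ 2 * s)) - ∑ k ∈ Finset.range n, Real.exp (-(t k) ^ 2 * s)
        = Real.exp (-(t n) ^ 2 * s) * R s := by
    intro s hs
    have h1 := Summable.sum_add_tsum_nat_add n (hsum s hs)
    have h2 : (∑' i, Real.exp (-(t (i + n)) ^ 2 * s))
        = Real.exp (-(t n) ^ 2 * s) * R s := by
      rw [hR, ← tsum_mul_left]
      congr 1
      funext i
      rw [← Real.exp_add]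
      congr 1
      simp only [hd]
      ring
    linarith
  -- inner expression equals (t n)^2 - (1/s) * log (R s) for s > 0
  have hinner : ∀ s : ℝ, 0 < s →
      -(1 / s) * Real.log ((∑' k, Real.exp (-(t k) ^ 2 * s)) -
          ∑ k ∈ Finset.range n, Real.exp (-(t k) ^ 2 * s))
        = (t n) ^ 2 - (1 / s) * Real.log (R s) := by
    intro s hs
    rw [hfact s hs, Real.log_mul (Real.exp_ne_zero _) (by have := hRge s hs; linarith),
      Real.log_exp]
    field_simp
    ring
  -- (1/s) * log (R s) → 0 by squeeze
  have hub : Tendsto (fun s : ℝ => (1 / s) * Real.log (R 1)) atTop (𝓝 0) := by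
    have := tendsto_inv_atTop_zero (𝕜 := ℝ) |>.mul_const (Real.log (R 1))
    simpa [one_div] using this
  have hg : Tendsto (fun s : ℝ => (1 / s) * Real.log (R s)) atTop (𝓝 0) := by
    refine tendsto_of_tendsto_of_tendsto_of_le_of_le' tendsto_const_nhds hub ?_ ?_
    · filter_upwards [eventually_ge_atTop (1 : ℝ)] with s hs
      have hs0 : (0 : ℝ) < s := by linarith
      have : 0 ≤ Real.log (R s) := Real.log_nonneg (hRge s hs0)
      positivity
    · filter_upwards [eventually_ge_atTop (1 : ℝ)] with s hs
      have hs0 : (0 : ℝ) < s := by linarith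
      have h1 : Real.log (R s) ≤ Real.log (R 1) :=
        Real.log_le_log (by linarith [hRge s hs0]) (hRle s hs)
      have h2 : 0 ≤ 1 / s := by positivity
      exact mul_le_mul_of_nonneg_left h1 h2
  have hmain : Tendsto (fun s : ℝ => (t n) ^ 2 - (1 / s) * Real.log (R s)) atTop
      (𝓝 ((t n) ^ 2)) := by
    have h := (tendsto_const_nhds (x := (t n) ^ 2) (f := (atTop : Filter ℝ))).sub hg
    rwa [sub_zero] at h
  have hsqrt : Tendsto (fun s : ℝ =>
      Real.sqrt ((t n) ^ 2 - (1 / s) * Real.log (R s))) atTop (𝓝 (t n)) := by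
    have := (Real.continuous_sqrt.tendsto ((t n) ^ 2)).comp hmain
    simpa [Real.sqrt_sq (hpos n).le, Function.comp_def] using this
  refine hsqrt.congr' ?_
  filter_upwards [eventually_gt_atTop (0 : ℝ)] with s hs
  rw [hinner s hs]
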